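/- For positive reals a, b with s·a ≤ b ≤ t·a for some 0 < s ≤ t ≤ 1, and v ∈ [0,1]: g_v(t)·a ≤ (1-v)a + vb - a^(1-v)b^v ≤ g_v(s)·a, where g_v(x) = (1-v) + vx - x^v. -/

import Mathlib

private lemma aux_mono (v : ℝ) (hv0 : 0 ≤ v) (hv1 : v ≤ 1) {x y : ℝ} (hx : 0 < x)
    (hxy : x ≤ y) (hy : y ≤ 1) : x ^ v - v * x ≤ y ^ v - v * y := by
  have hmono : MonotoneOn (fun z : ℝ => z ^ v - v * z) (Set.Icc x 1) := by
    apply monotoneOn_of_deriv_nonneg (convex_Icc x 1)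
    · apply ContinuousOn.sub
      · exact fun z hz => (Real.continuousAt_rpow_const z v (Or.inl (ne_of_gt (lt_of_lt_of_le hx hz.1)))).continuousWithinAt
      · exact (continuous_const.mul continuous_id).continuousOn
    · apply DifferentiableOn.sub
      · intro z hz
        rw [interior_Icc] at hz
        exact (Real.hasDerivAt_rpow_const (p := v)
          (Or.inl (ne_of_gt (lt_trans hx hz.1)))).differentiableAt.differentiableWithinAt
      · exact (differentiable_const v |>.mul differentiable_id).differentiableOn
    · intro z hz
      rw [interior_Icc] at hz
      have hz0 : 0 < z := lt_trans hx hz.1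
      have hd : HasDerivAt (fun z : ℝ => z ^ v - v * z) (v * z ^ (v - 1) - v) z := by
        have h1 : HasDerivAt (fun z : ℝ => z ^ v) (v * z ^ (v - 1)) z :=
          Real.hasDerivAt_rpow_const (Or.inl (ne_of_gt hz0))
        have h2 : HasDerivAt (fun z : ℝ => v * z) v z := by
          simpa using (hasDerivAt_id z).const_mul v
        exact h1.sub h2
      rw [hd.deriv]
      have hzv : (1 : ℝ) ≤ z ^ (v - 1) :=
        Real.one_le_rpow_of_pos_of_le_one_of_nonpos hz0 (le_of_lt hz.2) (by linarith)
      nlinarith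
  exact hmono ⟨le_refl x, le_trans hxy hy⟩ ⟨hxy, hy⟩ hxy

theorem stmt_16 (a b s t v : ℝ) (ha : 0 < a) (hb : 0 < b)
    (hs : 0 < s) (hst : s ≤ t) (ht : t ≤ 1)
    (hsa : s * a ≤ b) (hbt : b ≤ t * a) (hv0 : 0 ≤ v) (hv1 : v ≤ 1) :
    ((1 - v) + v * t - t ^ v) * a ≤ (1 - v) * a + v * b - a ^ (1 - v) * b ^ v ∧
    (1 - v) * a + v * b - a ^ (1 - v) * b ^ v ≤ ((1 - v) + v * s - s ^ v) * a := by
  set r := b / a with hr_def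
  have hr0 : 0 < r := div_pos hb ha
  have hsr : s ≤ r := (le_div_iff₀ ha).2 hsa
  have hrt : r ≤ t := (div_le_iff₀ ha).2 (by linarith [hbt])
  have hb_eq : b = r * a := by rw [hr_def]; field_simp
  have hkey : a ^ (1 - v) * b ^ v = r ^ v * a := by
    rw [hb_eq, Real.mul_rpow (le_of_lt hr0) (le_of_lt ha), ← mul_assoc,
      mul_comm (a ^ (1 - v)) (r ^ v), mul_assoc, ← Real.rpow_add ha]
    norm_num
  have h1 : r ^ v - v * r ≤ t ^ v - v * t := aux_mono v hv0 hv1 hr0 hrt ht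
  have h2 : s ^ v - v * s ≤ r ^ v - v * r := aux_mono v hv0 hv1 hs hsr (le_trans hrt ht)
  constructor <;> rw [hkey, hb_eq] <;>
    nlinarith [mul_le_mul_of_nonneg_right h1 ha.le, mul_le_mul_of_nonneg_right h2 ha.le]
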